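/- If D ⊆ ℝ is countable and U ⊆ ℝ is a nonempty open interval, then U \ D is homeomorphic to the Baire space ω^ω, provided D is dense in ℝ. -/

import Mathlib

open Set

namespace IntervalBaire

variable {D : Set ℝ}

/-- Pick an element of the dense set strictly between `lo` and `hi`. -/
noncomputable def pk (hD : Dense D) (lo hi : ℝ) : ℝ :=
  if h : lo < hi then (hD.exists_between h).choose else 0

lemma pk_spec (hD : Dense D) {lo hi : ℝ} (h : lo < hi) :
    pk hD lo hi ∈ D ∧ lo < pk hD lo hi ∧ pk hD lo hi < hi := by
  rw [pk, dif_pos h]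
  obtain ⟨hm, hIoo⟩ := (hD.exists_between h).choose_spec
  exact ⟨hm, hIoo.1, hIoo.2⟩

/-- A two-sided sequence of division points of `(p, q)` anchored at `m`,
increasing to `q` and decreasing to `p`, all in `D` (except possibly `m`). -/
noncomputable def dseq (hD : Dense D) (p q m : ℝ) : ℤ → ℝ := fun i =>
  if i = 0 then m
  else if 0 < i then pk hD (q - (q - m) / 2 ^ i) (q - (q - m) / 2 ^ (i + 1))
  else pk hD (p + (m - p) / 2 ^ (1 - i)) (p + (m - p) / 2 ^ (-i))

section dseq

variable (hD : Dense D) {p q m : ℝ} (hp : p < m) (hq : m < q)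

lemma two_zpow_pos (i : ℤ) : (0:ℝ) < 2 ^ i := zpow_pos (by norm_num) i

lemma two_zpow_lt {i j : ℤ} (h : i < j) : (2:ℝ) ^ i < 2 ^ j :=
  zpow_lt_zpow_right₀ (by norm_num) h


lemma div_zpow_le_half {c : ℝ} (hc : 0 ≤ c) {i : ℤ} (hi : 1 ≤ i) : c / 2 ^ i ≤ c / 2 := by
  have h2 : (2:ℝ) ≤ 2 ^ i := by
    calc (2:ℝ) = 2 ^ (1:ℤ) := (zpow_one 2).symm
    _ ≤ 2 ^ i := zpow_le_zpow_right₀ one_le_two hi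
  gcongr
  all_goals first | exact hc | exact h2 | norm_num

include hq in
lemma dseq_spec_pos {i : ℤ} (hi : 0 < i) :
    dseq hD p q m i ∈ D ∧ q - (q - m) / 2 ^ i < dseq hD p q m i ∧
      dseq hD p q m i < q - (q - m) / 2 ^ (i + 1) := by
  have hwin : q - (q - m) / 2 ^ i < q - (q - m) / 2 ^ (i + 1) := by
    have h1 : (q - m) / 2 ^ (i + 1) < (q - m) / 2 ^ i :=
      div_lt_div_of_pos_left (by linarith) (two_zpow_pos i) (two_zpow_lt (lt_add_one i))
    linarith
  have : dseq hD p q m i = pk hD (q - (q - m) / 2 ^ i) (q - (q - m) / 2 ^ (i + 1)) := by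
    rw [dseq, if_neg hi.ne', if_pos hi]
  rw [this]
  exact pk_spec hD hwin

include hp in
lemma dseq_spec_neg {i : ℤ} (hi : i < 0) :
    dseq hD p q m i ∈ D ∧ p + (m - p) / 2 ^ (1 - i) < dseq hD p q m i ∧
      dseq hD p q m i < p + (m - p) / 2 ^ (-i) := by
  have hwin : p + (m - p) / 2 ^ (1 - i) < p + (m - p) / 2 ^ (-i) := by
    have h1 : (m - p) / 2 ^ (1 - i) < (m - p) / 2 ^ (-i) :=
      div_lt_div_of_pos_left (by linarith) (two_zpow_pos (-i)) (two_zpow_lt (by omega))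
    linarith
  have : dseq hD p q m i = pk hD (p + (m - p) / 2 ^ (1 - i)) (p + (m - p) / 2 ^ (-i)) := by
    rw [dseq, if_neg hi.ne, if_neg (by omega)]
  rw [this]
  exact pk_spec hD hwin

include hp hq in
lemma dseq_mem (hm : m ∈ D) (i : ℤ) : dseq hD p q m i ∈ D := by
  rcases lt_trichotomy i 0 with h | h | h
  · exact (dseq_spec_neg (q := q) hD hp h).1
  · rw [dseq, h, if_pos rfl]; exact hm
  · exact (dseq_spec_pos (p := p) hD hq h).1

include hp hq in
lemma dseq_strictMono : StrictMono (dseq hD p q m) := by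
  apply strictMono_int_of_lt_succ
  intro i
  rcases lt_trichotomy i 0 with h | h | h
  · rcases eq_or_lt_of_le (by omega : i + 1 ≤ 0) with h1 | h1
    · -- i = -1 : d (-1) < p + (m-p)/2 ≤ m = d 0
      have hspec := dseq_spec_neg (q := q) hD hp h
      have hi : i = -1 := by omega
      have h2 : dseq hD p q m (i + 1) = m := by rw [dseq, if_pos (by omega)]
      rw [h2]
      have : (2:ℝ) ^ (-i) = 2 := by rw [hi]; norm_num
      have hlt : p + (m - p) / 2 ^ (-i) ≤ m := by
        rw [this]; linarith
      linarith [hspec.2.2]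
    · -- i ≤ -2 : d i < p + (m-p)/2^(-i) = p + (m-p)/2^(1-(i+1)) < d (i+1)
      have hspec := dseq_spec_neg (q := q) hD hp h
      have hspec2 := dseq_spec_neg (q := q) hD hp h1
      have : (1 : ℤ) - (i + 1) = -i := by ring
      rw [this] at hspec2
      linarith [hspec.2.2, hspec2.2.1]
  · -- i = 0 : m < q - (q-m)/2 < d 1
    subst h
    have hspec := dseq_spec_pos (p := p) hD hq (by norm_num : (0:ℤ) < 0 + 1)
    have h0 : dseq hD p q m 0 = m := by rw [dseq, if_pos rfl]
    have : (2:ℝ) ^ ((0:ℤ) + 1) = 2 := by norm_num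
    rw [this] at hspec
    rw [h0]
    have hle : m ≤ q - (q - m) / 2 := by linarith
    exact lt_of_le_of_lt hle hspec.2.1
  · -- i ≥ 1 : d i < q - (q-m)/2^(i+1) < d (i+1)
    have hspec := dseq_spec_pos (p := p) hD hq h
    have hspec2 := dseq_spec_pos (p := p) hD hq (by omega : (0:ℤ) < i + 1)
    linarith [hspec.2.2, hspec2.2.1]

include hp hq in
lemma dseq_mem_Ioo (i : ℤ) : dseq hD p q m i ∈ Ioo p q := by
  rcases lt_trichotomy i 0 with h | h | h
  · have hspec := dseq_spec_neg (q := q) hD hp h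
    constructor
    · have : (0:ℝ) < (m - p) / 2 ^ (1 - i) := by
        apply div_pos (by linarith) (two_zpow_pos _)
      linarith [hspec.2.1]
    · have : (m - p) / 2 ^ (-i) ≤ (m - p) / 2 := div_zpow_le_half (by linarith) (by omega)
      have := hspec.2.2
      nlinarith
  · rw [dseq, h, if_pos rfl]; exact ⟨hp, hq⟩
  · have hspec := dseq_spec_pos (p := p) hD hq h
    constructor
    · have : (q - m) / 2 ^ i ≤ (q - m) / 2 := div_zpow_le_half (by linarith) (by omega)
      have := hspec.2.1
      nlinarith
    · have : (0:ℝ) < (q - m) / 2 ^ (i + 1) := by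
        apply div_pos (by linarith) (two_zpow_pos _)
      linarith [hspec.2.2]

include hp hq in
lemma dseq_gap (i : ℤ) :
    dseq hD p q m (i + 1) - dseq hD p q m i ≤ 3 / 4 * (q - p) := by
  rcases lt_trichotomy i 0 with h | h | h
  · rcases eq_or_lt_of_le (by omega : i + 1 ≤ 0) with h1 | h1
    · -- i = -1 : gap = m - d(-1) < m - (p + (m-p)/4) = (3/4)(m-p)
      have hspec := dseq_spec_neg (q := q) hD hp h
      have hi : i = -1 := by omega
      have h2 : dseq hD p q m (i + 1) = m := by rw [dseq, if_pos (by omega)]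
      have h4 : (2:ℝ) ^ ((1:ℤ) - i) = 4 := by rw [hi]; norm_num
      rw [h2]
      rw [h4] at hspec
      have := hspec.2.1
      nlinarith
    · -- i ≤ -2 : both in (p + (m-p)/2^(1-i), p + (m-p)/2^(-(i+1))]
      have hspec := dseq_spec_neg (q := q) hD hp h
      have hspec2 := dseq_spec_neg (q := q) hD hp h1
      have key : (m - p) / 2 ^ (-(i+1)) - (m - p) / 2 ^ (1 - i) ≤ 3 / 4 * (q - p) := by
        have h5 : (m - p) / 2 ^ (-(i+1)) ≤ (m - p) / 2 :=
          div_zpow_le_half (by linarith) (by omega)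
        have h6 : (0:ℝ) < (m - p) / 2 ^ (1 - i) := div_pos (by linarith) (two_zpow_pos _)
        nlinarith
      linarith [hspec.2.1, hspec2.2.2]
  · -- i = 0 : gap = d 1 - m < q - (q-m)/4 - m = (3/4)(q-m)
    subst h
    have hspec := dseq_spec_pos (p := p) hD hq (by norm_num : (0:ℤ) < 0 + 1)
    have h0 : dseq hD p q m 0 = m := by rw [dseq, if_pos rfl]
    have h4 : (2:ℝ) ^ ((0:ℤ) + 1 + 1) = 4 := by norm_num
    rw [h4] at hspec
    rw [h0]
    have := hspec.2.2
    nlinarith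
  · -- i ≥ 1 : both in [q - (q-m)/2^i, q)
    have hspec := dseq_spec_pos (p := p) hD hq h
    have hspec2 := dseq_spec_pos (p := p) hD hq (by omega : (0:ℤ) < i + 1)
    have h5 : (q - m) / 2 ^ i ≤ (q - m) / 2 :=
      div_zpow_le_half (by linarith) (by omega)
    have h6 : (0:ℝ) < (q - m) / 2 ^ (i + 1 + 1) := div_pos (by linarith) (two_zpow_pos _)
    have := hspec.2.1
    have := hspec2.2.2
    nlinarith

include hp hq in
/-- Every point of `(p,q)` not in `D` lies strictly between consecutive division points. -/
lemma dseq_exists_between (hm : m ∈ D) {x : ℝ} (hx : x ∈ Ioo p q) (hxD : x ∉ D) :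
    ∃ i : ℤ, dseq hD p q m i < x ∧ x < dseq hD p q m (i + 1) := by
  classical
  have hne : ∀ i, dseq hD p q m i ≠ x := fun i hi => hxD (hi ▸ dseq_mem hD hp hq hm i)
  have hpow : ∀ n : ℕ, ((1:ℝ)/2) ^ n = ((2:ℝ) ^ (n:ℤ))⁻¹ := by
    intro n
    rw [one_div, inv_pow, zpow_natCast]
  -- upper index
  obtain ⟨j, hj⟩ : ∃ j : ℤ, x < dseq hD p q m j := by
    obtain ⟨n, hn⟩ := exists_pow_lt_of_lt_one
      (div_pos (by linarith [hx.2] : (0:ℝ) < q - x) (by linarith : (0:ℝ) < q - m))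
      (by norm_num : (1:ℝ)/2 < 1)
    refine ⟨(n:ℤ) + 1, ?_⟩
    have hspec := dseq_spec_pos (p := p) hD hq (by positivity : (0:ℤ) < (n:ℤ) + 1)
    have hn' : ((1:ℝ)/2) ^ n * (q - m) < q - x := by
      rw [lt_div_iff₀ (by linarith : (0:ℝ) < q - m)] at hn
      linarith [hn]
    have hmono : ((2:ℝ) ^ ((n:ℤ)+1))⁻¹ ≤ ((2:ℝ) ^ (n:ℤ))⁻¹ := by
      apply inv_anti₀ (two_zpow_pos _)
      exact zpow_le_zpow_right₀ (by norm_num) (by omega)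
    have hle : (q - m) / 2 ^ ((n:ℤ)+1) ≤ ((1:ℝ)/2) ^ n * (q - m) := by
      rw [hpow, div_eq_mul_inv, mul_comm]
      exact mul_le_mul_of_nonneg_right hmono (by linarith)
    have := hspec.2.1
    linarith
  -- lower index
  obtain ⟨k, hk⟩ : ∃ k : ℤ, dseq hD p q m k < x := by
    obtain ⟨n, hn⟩ := exists_pow_lt_of_lt_one
      (div_pos (by linarith [hx.1] : (0:ℝ) < x - p) (by linarith : (0:ℝ) < m - p))
      (by norm_num : (1:ℝ)/2 < 1)
    refine ⟨-(n:ℤ) - 1, ?_⟩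
    have hspec := dseq_spec_neg (q := q) hD hp (by omega : -(n:ℤ) - 1 < 0)
    have hn' : ((1:ℝ)/2) ^ n * (m - p) < x - p := by
      rw [lt_div_iff₀ (by linarith : (0:ℝ) < m - p)] at hn
      linarith [hn]
    have hmono : ((2:ℝ) ^ (-(-(n:ℤ) - 1)))⁻¹ ≤ ((2:ℝ) ^ (n:ℤ))⁻¹ := by
      apply inv_anti₀ (two_zpow_pos _)
      exact zpow_le_zpow_right₀ (by norm_num) (by omega)
    have hle : (m - p) / 2 ^ (-(-(n:ℤ) - 1)) ≤ ((1:ℝ)/2) ^ n * (m - p) := by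
      rw [hpow, div_eq_mul_inv, mul_comm]
      exact mul_le_mul_of_nonneg_right hmono (by linarith)
    have := hspec.2.2
    linarith
  -- greatest index below x
  have hkj : k < j := (dseq_strictMono hD hp hq).lt_iff_lt.mp (by linarith)
  have hex : ∃ n : ℕ, x < dseq hD p q m (k + n) := by
    refine ⟨(j - k).toNat, ?_⟩
    rwa [Int.toNat_of_nonneg (by omega), show k + (j - k) = j from by ring]
  set N := Nat.find hex with hNdef
  have hNspec : x < dseq hD p q m (k + (N : ℤ)) := Nat.find_spec hex
  have hN0 : N ≠ 0 := by
    intro h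
    rw [h] at hNspec
    norm_num at hNspec
    linarith
  refine ⟨k + (N - 1 : ℕ), ?_, ?_⟩
  · have hmin := Nat.find_min hex (show N - 1 < N by omega)
    push_neg at hmin
    exact lt_of_le_of_ne hmin (hne _)
  · have : k + ((N - 1 : ℕ) : ℤ) + 1 = k + (N : ℤ) := by
      have : (1:ℕ) ≤ N := by omega
      push_cast [Nat.cast_sub this]
      ring
    rw [this]
    exact hNspec

end dseq


/-- The anchor point for subdividing `(p,q)`: the point `e` if it lies inside, otherwise
some point of `D` inside. -/
noncomputable def anchor (hD : Dense D) (p q e : ℝ) : ℝ :=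
  if e ∈ Ioo p q then e else pk hD p q

lemma anchor_spec (hD : Dense D) {p q : ℝ} (hpq : p < q) {e : ℝ} (he : e ∈ D) :
    anchor hD p q e ∈ D ∧ anchor hD p q e ∈ Ioo p q := by
  rw [anchor]; split_ifs with h
  · exact ⟨he, h⟩
  · obtain ⟨h1, h2, h3⟩ := pk_spec hD hpq
    exact ⟨h1, h2, h3⟩

/-- A bijection `ℕ ≃ ℤ`. -/
def zE : ℕ ≃ ℤ := (Denumerable.eqv ℤ).symm

section scheme

variable (hD : Dense D) (f : ℕ → ℝ) (a b : ℝ)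

/-- The interval endpoints associated to a finite sequence of choices. -/
noncomputable def ivl : List ℕ → ℝ × ℝ
  | [] => (a, b)
  | i :: l =>
    let pq := ivl l
    let m := anchor hD pq.1 pq.2 (f l.length)
    (dseq hD pq.1 pq.2 m (zE i), dseq hD pq.1 pq.2 m (zE i + 1))

variable {f a b}
variable (hab : a < b) (hf : ∀ n, f n ∈ D)

lemma ivl_nil : ivl hD f a b [] = (a, b) := rfl

lemma ivl_cons (i : ℕ) (l : List ℕ) :
    ivl hD f a b (i :: l) =
      (dseq hD (ivl hD f a b l).1 (ivl hD f a b l).2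
        (anchor hD (ivl hD f a b l).1 (ivl hD f a b l).2 (f l.length)) (zE i),
       dseq hD (ivl hD f a b l).1 (ivl hD f a b l).2
        (anchor hD (ivl hD f a b l).1 (ivl hD f a b l).2 (f l.length)) (zE i + 1)) := rfl

include hab hf

lemma ivl_lt : ∀ l : List ℕ, (ivl hD f a b l).1 < (ivl hD f a b l).2 := by
  intro l
  induction l with
  | nil => exact hab
  | cons i l ih =>
    obtain ⟨hmD, hm1, hm2⟩ :=
      (fun h => ⟨h.1, h.2.1, h.2.2⟩ :
        _ → _ ∧ _ ∧ _) (anchor_spec hD ih (hf l.length))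
    rw [ivl_cons]
    exact dseq_strictMono hD hm1 hm2 (lt_add_one (zE i))

lemma ivl_cons_mem_Ioo (i : ℕ) (l : List ℕ) :
    (ivl hD f a b (i :: l)).1 ∈ Ioo (ivl hD f a b l).1 (ivl hD f a b l).2 ∧
    (ivl hD f a b (i :: l)).2 ∈ Ioo (ivl hD f a b l).1 (ivl hD f a b l).2 := by
  obtain ⟨hmD, hm1, hm2⟩ :=
    (fun h => ⟨h.1, h.2.1, h.2.2⟩ : _ → _ ∧ _ ∧ _)
      (anchor_spec hD (ivl_lt hD hab hf l) (hf l.length))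
  rw [ivl_cons]
  exact ⟨dseq_mem_Ioo hD hm1 hm2 _, dseq_mem_Ioo hD hm1 hm2 _⟩

lemma ivl_diff_le : ∀ l : List ℕ,
    (ivl hD f a b l).2 - (ivl hD f a b l).1 ≤ (b - a) * (3 / 4) ^ l.length := by
  intro l
  induction l with
  | nil =>
    rw [show ivl hD f a b [] = (a, b) from rfl]
    simp
  | cons i l ih =>
    obtain ⟨hmD, hm1, hm2⟩ :=
      (fun h => ⟨h.1, h.2.1, h.2.2⟩ : _ → _ ∧ _ ∧ _)
        (anchor_spec hD (ivl_lt hD hab hf l) (hf l.length))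
    have hgap := dseq_gap hD hm1 hm2 (zE i)
    rw [ivl_cons]
    simp only [List.length_cons]
    rw [pow_succ]
    calc dseq hD _ _ _ (zE i + 1) - dseq hD _ _ _ (zE i)
        ≤ 3 / 4 * ((ivl hD f a b l).2 - (ivl hD f a b l).1) := hgap
      _ ≤ 3 / 4 * ((b - a) * (3 / 4) ^ l.length) := by linarith
      _ = (b - a) * ((3 / 4) ^ l.length * (3 / 4)) := by ring

end scheme

section scheme2

variable (hD : Dense D) {f : ℕ → ℝ} {a b : ℝ}

/-- The interval scheme. -/
noncomputable def sch (f : ℕ → ℝ) (a b : ℝ) : List ℕ → Set ℝ := fun l =>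
  Ioo (ivl hD f a b l).1 (ivl hD f a b l).2

variable (hab : a < b) (hf : ∀ n, f n ∈ D)

include hab hf

lemma sch_nonempty (l : List ℕ) : (sch hD f a b l).Nonempty :=
  nonempty_Ioo.2 (ivl_lt hD hab hf l)

lemma sch_closureAntitone : CantorScheme.ClosureAntitone (sch hD f a b) := by
  intro l i
  rw [sch, sch, closure_Ioo (ne_of_lt (ivl_lt hD hab hf (i :: l)))]
  obtain ⟨h1, h2⟩ := ivl_cons_mem_Ioo hD hab hf i l
  intro x hx
  exact ⟨lt_of_lt_of_le h1.1 hx.1, lt_of_le_of_lt hx.2 h2.2⟩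

lemma sch_disjoint : CantorScheme.Disjoint (sch hD f a b) := by
  intro l i i' hne
  obtain ⟨hmD, hm1, hm2⟩ :=
    (fun h => ⟨h.1, h.2.1, h.2.2⟩ : _ → _ ∧ _ ∧ _)
      (anchor_spec hD (ivl_lt hD hab hf l) (hf l.length))
  have hsm := dseq_strictMono (q := (ivl hD f a b l).2) hD hm1 hm2
  have hzne : zE i ≠ zE i' := fun h => hne (zE.injective h)
  rw [Set.disjoint_left]
  intro x hx hx'
  rw [sch, ivl_cons] at hx hx'
  rcases lt_or_gt_of_ne hzne with h | h
  · have : dseq hD _ _ _ (zE i + 1) ≤ dseq hD _ _ _ (zE i') := hsm.monotone (by omega)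
    have := hx.2
    have := hx'.1
    simp only at *
    linarith
  · have : dseq hD _ _ _ (zE i' + 1) ≤ dseq hD _ _ _ (zE i) := hsm.monotone (by omega)
    have := hx.1
    have := hx'.2
    simp only at *
    linarith

lemma sch_vanishingDiam : CantorScheme.VanishingDiam (sch hD f a b) := by
  intro x
  have hupper : ∀ n : ℕ,
      Metric.ediam (sch hD f a b (PiNat.res x n)) ≤
        ENNReal.ofReal ((b - a) * (3 / 4) ^ n) := by
    intro n
    rw [sch, Real.ediam_Ioo]
    apply ENNReal.ofReal_le_ofReal
    have := ivl_diff_le hD hab hf (PiNat.res x n)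
    rwa [PiNat.res_length] at this
  have htend : Filter.Tendsto (fun n : ℕ => ENNReal.ofReal ((b - a) * (3 / 4) ^ n))
      Filter.atTop (nhds 0) := by
    rw [← ENNReal.ofReal_zero]
    apply ENNReal.tendsto_ofReal
    have h34 : Filter.Tendsto (fun n : ℕ => ((3:ℝ) / 4) ^ n) Filter.atTop (nhds 0) :=
      tendsto_pow_atTop_nhds_zero_of_lt_one (by norm_num) (by norm_num)
    have := h34.const_mul (b - a)
    simpa using this
  exact tendsto_of_tendsto_of_tendsto_of_le_of_le tendsto_const_nhds htend
    (fun n => zero_le) hupper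

/-- A point of the scheme set avoiding `D` has a child containing it. -/
lemma sch_exists_child {x : ℝ} {l : List ℕ} (hx : x ∈ sch hD f a b l) (hxD : x ∉ D) :
    ∃ i : ℕ, x ∈ sch hD f a b (i :: l) := by
  obtain ⟨hmD, hm1, hm2⟩ :=
    (fun h => ⟨h.1, h.2.1, h.2.2⟩ : _ → _ ∧ _ ∧ _)
      (anchor_spec hD (ivl_lt hD hab hf l) (hf l.length))
  obtain ⟨j, hj1, hj2⟩ := dseq_exists_between hD hm1 hm2 hmD hx hxD
  refine ⟨zE.symm j, ?_⟩
  rw [sch, ivl_cons]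
  simp only [Equiv.apply_symm_apply]
  exact ⟨hj1, hj2⟩

/-- A point in a child interval is not the anchor used at that level. -/
lemma sch_ne_anchor {x : ℝ} {l : List ℕ} {i : ℕ} (hx : x ∈ sch hD f a b (i :: l)) :
    x ≠ anchor hD (ivl hD f a b l).1 (ivl hD f a b l).2 (f l.length) := by
  obtain ⟨hmD, hm1, hm2⟩ :=
    (fun h => ⟨h.1, h.2.1, h.2.2⟩ : _ → _ ∧ _ ∧ _)
      (anchor_spec hD (ivl_lt hD hab hf l) (hf l.length))
  have hsm := dseq_strictMono (q := (ivl hD f a b l).2) hD hm1 hm2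
  intro hxm
  rw [sch, ivl_cons] at hx
  have hm0 : anchor hD (ivl hD f a b l).1 (ivl hD f a b l).2 (f l.length) =
      dseq hD (ivl hD f a b l).1 (ivl hD f a b l).2
        (anchor hD (ivl hD f a b l).1 (ivl hD f a b l).2 (f l.length)) 0 := by
    rw [dseq, if_pos rfl]
  rw [hxm, hm0] at hx
  have h1 : zE i < 0 := hsm.lt_iff_lt.mp hx.1
  have h2 : (0:ℤ) < zE i + 1 := hsm.lt_iff_lt.mp hx.2
  omega

end scheme2


section assemblyDefs

variable (hD : Dense D)

open Classical in
/-- Choice of a child index containing `x`. -/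
noncomputable def childIdx (f : ℕ → ℝ) (a b : ℝ) (l : List ℕ) (x : ℝ) : ℕ :=
  if h : ∃ i : ℕ, x ∈ sch hD f a b (i :: l) then h.choose else 0

/-- Iterated children containing `x`, starting from `l`. -/
noncomputable def chain (f : ℕ → ℝ) (a b : ℝ) (x : ℝ) (l : List ℕ) : ℕ → List ℕ
  | 0 => l
  | n + 1 => childIdx hD f a b (chain f a b x l n) x :: chain f a b x l n

/-- The map induced by the scheme, as a total function on Baire space. -/
noncomputable def F (f : ℕ → ℝ) (a b : ℝ) (h1 : a < b) (h2 : ∀ n, f n ∈ D)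
    (x : ℕ → ℕ) : ℝ :=
  (CantorScheme.inducedMap (sch hD f a b)).2
    ⟨x, by
      rw [CantorScheme.ClosureAntitone.map_of_vanishingDiam
        (sch_vanishingDiam hD h1 h2) (sch_closureAntitone hD h1 h2)
        (sch_nonempty hD h1 h2)]
      trivial⟩

end assemblyDefs

section assembly

variable (hD : Dense D) {f : ℕ → ℝ} {a b : ℝ}
variable (hab : a < b) (hf : ∀ n, f n ∈ D)

include hab hf in
lemma chain_mem {x : ℝ} {l : List ℕ} (hx : x ∈ sch hD f a b l) (hxD : x ∉ D) :
    ∀ n, x ∈ sch hD f a b (chain hD f a b x l n) := by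
  intro n
  induction n with
  | zero => exact hx
  | succ n ih =>
    have hex := sch_exists_child hD hab hf ih hxD
    show x ∈ sch hD f a b (childIdx hD f a b (chain hD f a b x l n) x :: _)
    rw [childIdx, dif_pos hex]
    exact hex.choose_spec

include hab hf in
lemma sch_antitone_res (x : ℕ → ℕ) {m n : ℕ} (hmn : m ≤ n) :
    sch hD f a b (PiNat.res x n) ⊆ sch hD f a b (PiNat.res x m) := by
  induction n with
  | zero =>
    have : m = 0 := Nat.le_zero.mp hmn
    subst this; exact subset_rfl
  | succ n ih =>
    rcases Nat.lt_or_ge m (n + 1) with h | h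
    · have h1 : sch hD f a b (PiNat.res x (n + 1)) ⊆ sch hD f a b (PiNat.res x n) := by
        rw [PiNat.res_succ]
        exact (sch_closureAntitone hD hab hf).antitone _ _
      exact h1.trans (ih (by omega))
    · have : m = n + 1 := by omega
      subst this; exact subset_rfl

include hab hf

lemma F_mem (x : ℕ → ℕ) (n : ℕ) :
    F hD f a b hab hf x ∈ sch hD f a b (PiNat.res x n) :=
  CantorScheme.map_mem _ n

lemma F_mem_Ioo (x : ℕ → ℕ) : F hD f a b hab hf x ∈ Ioo a b := by
  have := F_mem hD hab hf x 0
  rwa [PiNat.res_zero] at this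

lemma F_not_mem_D (hfr : D ⊆ range f) (x : ℕ → ℕ) : F hD f a b hab hf x ∉ D := by
  intro hmem
  obtain ⟨n, hn⟩ := hfr hmem
  have h1 := F_mem hD hab hf x (n + 1)
  rw [PiNat.res_succ] at h1
  have h2 := sch_ne_anchor hD hab hf h1
  rw [PiNat.res_length] at h2
  have h3 := F_mem hD hab hf x n
  apply h2
  rw [anchor, if_pos]
  · exact hn.symm
  · rw [← hn] at h3
    exact h3

lemma F_injective : Function.Injective (F hD f a b hab hf) := by
  intro x y hxy
  unfold F at hxy
  exact congrArg Subtype.val ((sch_disjoint hD hab hf).map_injective hxy)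

lemma F_continuous : Continuous (F hD f a b hab hf) := by
  unfold F
  exact ((sch_vanishingDiam hD hab hf).map_continuous).comp
    (Continuous.subtype_mk continuous_id _)

/-- Key surjectivity statement: every non-`D` point of a cylinder's interval is hit
by a branch in that cylinder. -/
lemma exists_branch {y : ℕ → ℕ} {k : ℕ} {x : ℝ}
    (hx : x ∈ sch hD f a b (PiNat.res y k)) (hxD : x ∉ D) :
    ∃ g : ℕ → ℕ, g ∈ PiNat.cylinder y k ∧ F hD f a b hab hf g = x := by
  classical
  set l : List ℕ := PiNat.res y k with hl
  refine ⟨fun n => if n < k then y n else childIdx hD f a b (chain hD f a b x l (n - k)) x,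
    ?_, ?_⟩
  · intro i hi
    simp [hi]
  · set g : ℕ → ℕ :=
      fun n => if n < k then y n else childIdx hD f a b (chain hD f a b x l (n - k)) x with hg
    have hres : ∀ n, PiNat.res g n =
        if n ≤ k then PiNat.res y n else chain hD f a b x l (n - k) := by
      intro n
      induction n with
      | zero => simp [PiNat.res_zero]
      | succ n ih =>
        rw [PiNat.res_succ]
        rcases Nat.lt_or_ge n k with h | h
        · rw [ih, if_pos (by omega), if_pos (by omega)]
          have : g n = y n := by rw [hg]; simp [h]
          rw [this, ← PiNat.res_succ]
        · have hgn : g n = childIdx hD f a b (chain hD f a b x l (n - k)) x := by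
            rw [hg]; simp [Nat.not_lt.mpr h]
          rw [if_neg (by omega)]
          rcases Nat.eq_or_lt_of_le h with h' | h'
          · rw [ih, if_pos (le_of_eq h'.symm), hgn,
              show n - k = 0 from by omega, show n + 1 - k = 1 from by omega]
            have hyn : PiNat.res y n = l := by rw [hl, h']
            rw [hyn]
            rfl
          · rw [ih, if_neg (by omega), hgn]
            have he3 : n + 1 - k = (n - k) + 1 := by omega
            rw [he3]
            rfl
    have hxmem : ∀ n, x ∈ sch hD f a b (PiNat.res g n) := by
      intro n
      rw [hres n]
      rcases le_or_gt n k with h | h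
      · rw [if_pos h]
        exact sch_antitone_res hD hab hf y h hx
      · rw [if_neg (by omega)]
        exact chain_mem hD hab hf hx hxD _
    -- x and F g are both in all the sets along branch g, which have vanishing diameter
    by_contra hne
    have hd : 0 < dist x (F hD f a b hab hf g) := dist_pos.mpr (fun h => hne h.symm)
    obtain ⟨n, hn⟩ := (sch_vanishingDiam hD hab hf).dist_lt _ hd g
    exact absurd (hn x (hxmem n) _ (F_mem hD hab hf g n)) (lt_irrefl _)

lemma F_image_cylinder (y : ℕ → ℕ) (k : ℕ) (hfr : D ⊆ range f) :
    F hD f a b hab hf '' PiNat.cylinder y k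
      = sch hD f a b (PiNat.res y k) \ D := by
  apply Subset.antisymm
  · rintro _ ⟨g, hg, rfl⟩
    constructor
    · have hgy : PiNat.res g k = PiNat.res y k := by
        rw [PiNat.cylinder_eq_res] at hg
        exact hg
      have := F_mem hD hab hf g k
      rwa [hgy] at this
    · exact F_not_mem_D hD hab hf hfr g
  · rintro x ⟨hx1, hx2⟩
    obtain ⟨g, hg, hgx⟩ := exists_branch hD hab hf hx1 hx2
    exact ⟨g, hg, hgx⟩

lemma F_surjective (hfr : D ⊆ range f) {x : ℝ} (hx : x ∈ Ioo a b \ D) :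
    ∃ g : ℕ → ℕ, F hD f a b hab hf g = x := by
  have hx0 : x ∈ sch hD f a b (PiNat.res (fun _ => 0) 0) := by
    rw [PiNat.res_zero]
    exact hx.1
  obtain ⟨g, _, hgx⟩ := exists_branch hD hab hf hx0 hx.2
  exact ⟨g, hgx⟩

end assembly

end IntervalBaire

open IntervalBaire in
/-- If `D ⊆ ℝ` is countable and dense and `(a,b)` is a nonempty open interval, then
`(a,b) \ D` is homeomorphic to the Baire space `ω^ω`. -/
theorem interval_diff_countable_dense_homeo_baire (D : Set ℝ)
    (hDc : D.Countable) (hDd : Dense D) (a b : ℝ) (hab : a < b) :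
    Nonempty (↥(Set.Ioo a b \ D) ≃ₜ (ℕ → ℕ)) := by
  classical
  obtain ⟨f, hf⟩ := hDc.exists_eq_range hDd.nonempty
  have hfD : ∀ n, f n ∈ D := fun n => hf ▸ mem_range_self n
  have hfr : D ⊆ range f := hf.le
  set S := Set.Ioo a b \ D with hS
  have hFmem : ∀ x : ℕ → ℕ, F hDd f a b hab hfD x ∈ S := fun x =>
    ⟨F_mem_Ioo hDd hab hfD x, F_not_mem_D hDd hab hfD hfr x⟩
  set G : (ℕ → ℕ) → S := fun x => ⟨F hDd f a b hab hfD x, hFmem x⟩ with hG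
  have hGinj : Function.Injective G := fun x y h =>
    F_injective hDd hab hfD (congrArg Subtype.val h)
  have hGsurj : Function.Surjective G := by
    rintro ⟨x, hx⟩
    obtain ⟨g, hg⟩ := F_surjective hDd hab hfD hfr hx
    exact ⟨g, Subtype.ext hg⟩
  have hGcont : Continuous G :=
    (F_continuous hDd hab hfD).subtype_mk _
  have hGopen : IsOpenMap G := by
    rw [(PiNat.isTopologicalBasis_cylinders (fun _ : ℕ => ℕ)).isOpenMap_iff]
    rintro s ⟨y, k, rfl⟩
    have himg : G '' PiNat.cylinder y k
        = Subtype.val ⁻¹' (sch hDd f a b (PiNat.res y k)) := by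
      ext z
      constructor
      · rintro ⟨g, hg, rfl⟩
        have hmem2 : F hDd f a b hab hfD g ∈ sch hDd f a b (PiNat.res y k) \ D := by
          rw [← F_image_cylinder hDd hab hfD y k hfr]
          exact ⟨g, hg, rfl⟩
        exact hmem2.1
      · intro hz
        have hz' : (z : ℝ) ∈ sch hDd f a b (PiNat.res y k) \ D := ⟨hz, z.2.2⟩
        rw [← F_image_cylinder hDd hab hfD y k hfr] at hz'
        obtain ⟨g, hg, hgz⟩ := hz'
        exact ⟨g, hg, Subtype.ext hgz⟩
    rw [himg]
    exact (isOpen_Ioo).preimage continuous_subtype_val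
  exact ⟨(Equiv.toHomeomorphOfContinuousOpen
    (Equiv.ofBijective G ⟨hGinj, hGsurj⟩) hGcont hGopen).symm⟩
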